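/- arXiv:2011.04018 — 3 statements merged into one kernel-verified Lean document; each statement's English description precedes it below -/
import Mathlib

section
/- Let q and ε be real numbers with 0 < q ≤ 1/2 and −q/2 ≤ ε ≤ 1 − 2q. Then q·log(q/(q+ε)) + (1−q)·log((1−q)/(1−q−ε)) ≤ 2ε²/q. -/
lemma log_one_add_ge (u : ℝ) (hu : -(1/2) ≤ u) : u - u ^ 2 ≤ Real.log (1 + u) := by
  have h1u : (0:ℝ) < 1 + u := by linarith
  rw [Real.le_log_iff_exp_le h1u]
  rcases le_or_gt 0 u with h | h
  · -- exp(u - u²) ≤ 1/(1 - (u-u²)) ≤ 1+u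
    have hx : u - u ^ 2 < 1 := by nlinarith
    have h2 : 1 - (u - u ^ 2) ≤ Real.exp (-(u - u ^ 2)) := by
      have := Real.add_one_le_exp (-(u - u ^ 2)); linarith
    have h3 : Real.exp (u - u ^ 2) * (1 - (u - u ^ 2)) ≤ 1 := by
      calc Real.exp (u - u ^ 2) * (1 - (u - u ^ 2))
          ≤ Real.exp (u - u ^ 2) * Real.exp (-(u - u ^ 2)) := by
            exact mul_le_mul_of_nonneg_left h2 (Real.exp_pos _).le
        _ = 1 := by rw [← Real.exp_add]; simp
    have hpos : (0:ℝ) < 1 - (u - u ^ 2) := by linarith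
    have h4 : Real.exp (u - u ^ 2) ≤ 1 / (1 - (u - u ^ 2)) := by
      rw [le_div_iff₀ hpos]; linarith
    have h5 : 1 / (1 - (u - u ^ 2)) ≤ 1 + u := by
      rw [div_le_iff₀ hpos]; nlinarith
    linarith
  · -- u < 0 : set t = -u, use quadratic lower bound on exp(t+t²)
    set t : ℝ := -u with ht
    have ht0 : 0 < t := by simp [ht]; linarith
    have ht2 : t ≤ 1/2 := by simp [ht]; linarith
    have hq : 1 + (t + t ^ 2) + (t + t ^ 2) ^ 2 / 2 ≤ Real.exp (t + t ^ 2) :=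
      Real.quadratic_le_exp_of_nonneg (by nlinarith)
    -- need : exp(u - u²) ≤ 1 + u, i.e. exp(-(t+t²)) ≤ 1 - t, i.e. 1/(1-t) ≤ exp(t+t²)
    have h1t : (0:ℝ) < 1 - t := by linarith
    have key : 1 / (1 - t) ≤ Real.exp (t + t ^ 2) := by
      refine le_trans ?_ hq
      rw [div_le_iff₀ h1t]; nlinarith
    have huu : u - u ^ 2 = -(t + t ^ 2) := by rw [ht]; ring
    rw [huu, Real.exp_neg, inv_eq_one_div]
    rw [div_le_iff₀ (Real.exp_pos _)]
    have := (div_le_iff₀ h1t).mp key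
    calc (1:ℝ) = (1 / (1 - t)) * (1 - t) := by field_simp
      _ ≤ Real.exp (t + t ^ 2) * (1 - t) := by
          exact mul_le_mul_of_nonneg_right key h1t.le
      _ = (1 - t) * Real.exp (t + t ^ 2) := by ring
      _ = (1 + u) * Real.exp (t + t ^ 2) := by simp [ht]

/-- Bernoulli KL divergence inequality (Lemma 20 of Jaksch et al.):
for `0 < q ≤ 1/2` and `-q/2 ≤ ε ≤ 1 - 2q`,
`q·log(q/(q+ε)) + (1−q)·log((1−q)/(1−q−ε)) ≤ 2ε²/q`. -/
theorem bernoulli_kl_le (q ε : ℝ) (hq0 : 0 < q) (hq : q ≤ 1 / 2)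
    (hε1 : -q / 2 ≤ ε) (hε2 : ε ≤ 1 - 2 * q) :
    q * Real.log (q / (q + ε)) + (1 - q) * Real.log ((1 - q) / (1 - q - ε)) ≤
      2 * ε ^ 2 / q := by
  have hqε : 0 < q + ε := by linarith
  have h1qε : 0 < 1 - q - ε := by linarith
  have h1q : 0 < 1 - q := by linarith
  -- first term: q * log(q/(q+ε)) = -q * log(1 + ε/q) ≤ -ε + ε²/q
  have hu : -(1/2) ≤ ε / q := by
    rw [le_div_iff₀ hq0]; linarith
  have hlog1 : ε / q - (ε / q) ^ 2 ≤ Real.log (1 + ε / q) := log_one_add_ge _ hu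
  have heq1 : Real.log (q / (q + ε)) = -Real.log (1 + ε / q) := by
    rw [← Real.log_inv]
    congr 1
    field_simp
  have h1 : q * Real.log (q / (q + ε)) ≤ -ε + ε ^ 2 / q := by
    rw [heq1]
    have : -(Real.log (1 + ε / q)) ≤ -(ε / q - (ε / q) ^ 2) := by linarith
    calc q * -Real.log (1 + ε / q) ≤ q * -(ε / q - (ε / q) ^ 2) := by
          exact mul_le_mul_of_nonneg_left this hq0.le
      _ = -ε + ε ^ 2 / q := by field_simp; ring
  -- second term: (1-q) * log((1-q)/(1-q-ε)) ≤ ε + ε²/(1-q-ε) ≤ ε + ε²/q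
  have hlog2 : Real.log ((1 - q) / (1 - q - ε)) ≤ (1 - q) / (1 - q - ε) - 1 :=
    Real.log_le_sub_one_of_pos (by positivity)
  have h2 : (1 - q) * Real.log ((1 - q) / (1 - q - ε)) ≤ ε + ε ^ 2 / (1 - q - ε) := by
    calc (1 - q) * Real.log ((1 - q) / (1 - q - ε))
        ≤ (1 - q) * ((1 - q) / (1 - q - ε) - 1) :=
          mul_le_mul_of_nonneg_left hlog2 h1q.le
      _ = ε + ε ^ 2 / (1 - q - ε) := by field_simp; ring
  have h3 : ε ^ 2 / (1 - q - ε) ≤ ε ^ 2 / q := by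
    apply div_le_div_of_nonneg_left (by positivity) hq0
    linarith
  have : q * Real.log (q / (q + ε)) + (1 - q) * Real.log ((1 - q) / (1 - q - ε))
      ≤ ε ^ 2 / q + ε ^ 2 / q := by linarith
  calc q * Real.log (q / (q + ε)) + (1 - q) * Real.log ((1 - q) / (1 - q - ε))
      ≤ ε ^ 2 / q + ε ^ 2 / q := this
    _ = 2 * ε ^ 2 / q := by ring
end

section
/- Let Σ_0 and Σ_1 be positive semi-definite d×d real matrices, let s ≥ 1 be an integer, and suppose the restricted minimum eigenvalue satisfies C_min(Σ_0, s) > 0 and that the entrywise maximum norm satisfies ‖Σ_1 − Σ_0‖_∞ ≤ C_min(Σ_0, s)/(32s). Then C_min(Σ_1, s) ≥ C_min(Σ_0, s)/2. -/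
open Finset

/-- Restriction of a vector to the coordinates in `S` (zero elsewhere). -/
def restrictVec {d : ℕ} (S : Finset (Fin d)) (β : Fin d → ℝ) : Fin d → ℝ :=
  fun j => if j ∈ S then β j else 0

/-- ℓ1 norm of a vector in ℝ^d. -/
def l1Norm {d : ℕ} (v : Fin d → ℝ) : ℝ := ∑ j, |v j|

/-- squared ℓ2 norm of a vector in ℝ^d. -/
def l2NormSq {d : ℕ} (v : Fin d → ℝ) : ℝ := ∑ j, (v j) ^ 2

/-- Restricted minimum eigenvalue `C_min(Z, s)`: the infimum, over subsets `S ⊆ [d]` with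
`|S| ≤ s` and vectors `β` with `β_S ≠ 0` and `‖β_{Sᶜ}‖₁ ≤ 3‖β_S‖₁`, of
`⟨β, Zβ⟩ / ‖β_S‖₂²`. -/
noncomputable def Cmin {d : ℕ} (Z : Matrix (Fin d) (Fin d) ℝ) (s : ℕ) : ℝ :=
  sInf {c : ℝ | ∃ S : Finset (Fin d), S.card ≤ s ∧ ∃ β : Fin d → ℝ,
    restrictVec S β ≠ 0 ∧ l1Norm (restrictVec Sᶜ β) ≤ 3 * l1Norm (restrictVec S β) ∧
    c = (∑ i, ∑ j, β i * Z i j * β j) / l2NormSq (restrictVec S β)}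

lemma l1_restrict_eq {d : ℕ} (S : Finset (Fin d)) (β : Fin d → ℝ) :
    l1Norm (restrictVec S β) = ∑ j ∈ S, |β j| := by
  unfold l1Norm restrictVec
  simp [apply_ite abs, Finset.sum_ite_mem]

lemma l2_restrict_eq {d : ℕ} (S : Finset (Fin d)) (β : Fin d → ℝ) :
    l2NormSq (restrictVec S β) = ∑ j ∈ S, (β j)^2 := by
  unfold l2NormSq restrictVec
  simp [apply_ite (· ^ 2), Finset.sum_ite_mem]

lemma quad_nonneg {d : ℕ} (Z : Matrix (Fin d) (Fin d) ℝ) (hZ : Z.PosSemidef)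
    (β : Fin d → ℝ) : 0 ≤ ∑ i, ∑ j, β i * Z i j * β j := by
  have := hZ.dotProduct_mulVec_nonneg β
  simpa [dotProduct, Matrix.mulVec, Finset.mul_sum, mul_assoc] using this

lemma l2_pos {d : ℕ} (v : Fin d → ℝ) (h : v ≠ 0) : 0 < l2NormSq v := by
  obtain ⟨j, hj⟩ := Function.ne_iff.mp h
  have h1 : 0 < (v j)^2 := by have := sq_abs (v j); nlinarith [abs_pos.mpr hj]
  exact lt_of_lt_of_le h1 (Finset.single_le_sum (fun i _ => sq_nonneg (v i)) (mem_univ j))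

/-- Restricted-eigenvalue perturbation lemma (Corollary 6.8 in Bühlmann–van de Geer):
if `C_min(Sigma0, s) > 0` and `‖Sigma1 − Sigma0‖_∞ ≤ C_min(Sigma0, s)/(32 s)` entrywise, then
`C_min(Sigma1, s) ≥ C_min(Sigma0, s)/2`. -/
theorem cmin_perturbation {d : ℕ} (Sigma0 Sigma1 : Matrix (Fin d) (Fin d) ℝ)
    (h₀ : Sigma0.PosSemidef) (h₁ : Sigma1.PosSemidef)
    (s : ℕ) (hs : 1 ≤ s)
    (hpos : 0 < Cmin Sigma0 s)
    (hclose : ∀ i j, |Sigma1 i j - Sigma0 i j| ≤ Cmin Sigma0 s / (32 * s)) :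
    Cmin Sigma0 s / 2 ≤ Cmin Sigma1 s := by
  set ε := Cmin Sigma0 s / (32 * s) with hε
  set A0 : Set ℝ := {c : ℝ | ∃ S : Finset (Fin d), S.card ≤ s ∧ ∃ β : Fin d → ℝ,
    restrictVec S β ≠ 0 ∧ l1Norm (restrictVec Sᶜ β) ≤ 3 * l1Norm (restrictVec S β) ∧
    c = (∑ i, ∑ j, β i * Sigma0 i j * β j) / l2NormSq (restrictVec S β)} with hA0
  set A1 : Set ℝ := {c : ℝ | ∃ S : Finset (Fin d), S.card ≤ s ∧ ∃ β : Fin d → ℝ,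
    restrictVec S β ≠ 0 ∧ l1Norm (restrictVec Sᶜ β) ≤ 3 * l1Norm (restrictVec S β) ∧
    c = (∑ i, ∑ j, β i * Sigma1 i j * β j) / l2NormSq (restrictVec S β)} with hA1
  have hC0 : Cmin Sigma0 s = sInf A0 := rfl
  have hC1 : Cmin Sigma1 s = sInf A1 := rfl
  -- A0 bounded below by 0
  have hbdd : BddBelow A0 := by
    refine ⟨0, fun c hc => ?_⟩
    obtain ⟨S, _, β, hne, _, rfl⟩ := hc
    exact div_nonneg (quad_nonneg Sigma0 h₀ β) (le_of_lt (l2_pos _ hne))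
  -- A0 nonempty (else Cmin Sigma0 s = 0)
  have hne0 : A0.Nonempty := by
    by_contra h
    rw [Set.not_nonempty_iff_eq_empty] at h
    rw [hC0, h, Real.sInf_empty] at hpos
    exact lt_irrefl 0 hpos
  -- A1 nonempty
  have hne1 : A1.Nonempty := by
    obtain ⟨c, S, hS, β, hne, hl1, _⟩ := hne0
    exact ⟨_, S, hS, β, hne, hl1, rfl⟩
  rw [hC1]
  refine le_csInf hne1 ?_
  rintro c ⟨S, hS, β, hne, hl1, rfl⟩
  set b := l2NormSq (restrictVec S β) with hb
  have hbpos : 0 < b := l2_pos _ hne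
  set Q0 := ∑ i, ∑ j, β i * Sigma0 i j * β j with hQ0
  set Q1 := ∑ i, ∑ j, β i * Sigma1 i j * β j with hQ1
  -- Cmin Sigma0 s ≤ Q0 / b
  have hmem : Q0 / b ∈ A0 := ⟨S, hS, β, hne, hl1, rfl⟩
  have hle : Cmin Sigma0 s ≤ Q0 / b := csInf_le hbdd hmem
  have hQ0ge : Cmin Sigma0 s * b ≤ Q0 := by
    rw [← le_div_iff₀ hbpos]; exact hle
  -- ℓ1 bounds
  set a := l1Norm (restrictVec S β) with ha
  have hanonneg : 0 ≤ a := by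
    rw [ha, l1_restrict_eq]; exact Finset.sum_nonneg fun i _ => abs_nonneg _
  have ht : ∑ i, |β i| ≤ 4 * a := by
    have hsplit : ∑ j ∈ S, |β j| + ∑ j ∈ Sᶜ, |β j| = ∑ j, |β j| :=
      Finset.sum_add_sum_compl S _
    have h1 : l1Norm (restrictVec Sᶜ β) = ∑ j ∈ Sᶜ, |β j| := l1_restrict_eq _ _
    have h2 : a = ∑ j ∈ S, |β j| := l1_restrict_eq _ _
    have h3 := hl1
    rw [h1, h2] at h3
    rw [h2]
    linarith
  have htnonneg : 0 ≤ ∑ i, |β i| := Finset.sum_nonneg fun i _ => abs_nonneg _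
  -- Cauchy-Schwarz : a^2 ≤ s * b
  have hcs : a ^ 2 ≤ (s : ℝ) * b := by
    rw [ha, l1_restrict_eq, hb, l2_restrict_eq]
    calc (∑ j ∈ S, |β j|) ^ 2 ≤ (S.card : ℝ) * ∑ j ∈ S, |β j| ^ 2 :=
          sq_sum_le_card_mul_sum_sq
      _ ≤ (s : ℝ) * ∑ j ∈ S, (β j) ^ 2 := by
          apply mul_le_mul (by exact_mod_cast hS)
            (le_of_eq (Finset.sum_congr rfl fun j _ => sq_abs (β j)))
            (Finset.sum_nonneg fun j _ => sq_nonneg _) (Nat.cast_nonneg s)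
  -- perturbation bound
  have hεnonneg : 0 ≤ ε := by
    rw [hε]
    apply div_nonneg (le_of_lt hpos)
    positivity
  have hkey : |Q1 - Q0| ≤ ε * (∑ i, |β i|) ^ 2 := by
    have hdiff : Q1 - Q0 = ∑ i, ∑ j, β i * (Sigma1 i j - Sigma0 i j) * β j := by
      rw [hQ1, hQ0]
      rw [← Finset.sum_sub_distrib]
      apply Finset.sum_congr rfl
      intro i _
      rw [← Finset.sum_sub_distrib]
      apply Finset.sum_congr rfl
      intro j _
      ring
    rw [hdiff]
    calc |∑ i, ∑ j, β i * (Sigma1 i j - Sigma0 i j) * β j|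
        ≤ ∑ i, |∑ j, β i * (Sigma1 i j - Sigma0 i j) * β j| :=
          Finset.abs_sum_le_sum_abs _ _
      _ ≤ ∑ i, ∑ j, |β i * (Sigma1 i j - Sigma0 i j) * β j| :=
          Finset.sum_le_sum fun i _ => Finset.abs_sum_le_sum_abs _ _
      _ ≤ ∑ i, ∑ j, |β i| * ε * |β j| := by
          apply Finset.sum_le_sum; intro i _
          apply Finset.sum_le_sum; intro j _
          rw [abs_mul, abs_mul]
          apply mul_le_mul_of_nonneg_right _ (abs_nonneg _)
          exact mul_le_mul_of_nonneg_left (hclose i j) (abs_nonneg _)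
      _ = ε * (∑ i, |β i|) ^ 2 := by
          simp only [← Finset.mul_sum, ← Finset.sum_mul, mul_assoc]
          ring
  -- combine
  have hεb : ε * (∑ i, |β i|) ^ 2 ≤ Cmin Sigma0 s / 2 * b := by
    have h16 : (∑ i, |β i|) ^ 2 ≤ 16 * a ^ 2 := by nlinarith
    have h1 : ε * (∑ i, |β i|) ^ 2 ≤ ε * (16 * ((s : ℝ) * b)) := by
      apply mul_le_mul_of_nonneg_left _ hεnonneg
      nlinarith
    have hspos : (0 : ℝ) < s := by exact_mod_cast hs
    have : ε * (16 * ((s : ℝ) * b)) = Cmin Sigma0 s / 2 * b := by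
      rw [hε]; field_simp; ring
    linarith
  have hQ1ge : Cmin Sigma0 s / 2 * b ≤ Q1 := by
    have habs : Q0 - Q1 ≤ ε * (∑ i, |β i|) ^ 2 := by
      have := abs_le.mp hkey
      linarith [this.1]
    nlinarith [hQ0ge]
  rw [le_div_iff₀ hbpos]
  exact hQ1ge
end

section
/- Let s ≥ 2 and d ≥ 2s be integers and let S' ⊆ ℝ^d be the set of vectors z with z_j ∈ {−1, 0, 1} for all j, z_j = 0 for j ∈ {1,…,s−1} ∪ {d}, and exactly s−1 nonzero coordinates. Then for every vector φ ∈ ℝ^d with φ_j ∈ {−1, 0, 1} for all j and at most s−1 nonzero coordinates, (1/|S'|)·Σ_{z∈S'} ⟨φ, z⟩² ≤ (s−1)²/(d−s). -/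
open Finset

/-- The finite set `S' ⊆ ℝ^d` of sign-vectors from Step 4 of the lower-bound proof:
entries in `{-1, 0, 1}`, zero in the first `s-1` coordinates and in the last coordinate
(1-based coordinates `{1,…,s−1}` and `d`), with exactly `s-1` nonzero coordinates. -/
noncomputable def Sprime (d s : ℕ) : Finset (Fin d → ℝ) := by
  classical
  exact (Fintype.piFinset fun _ : Fin d => ({-1, 0, 1} : Finset ℝ)).filter
    (fun z => (∀ j : Fin d, (j : ℕ) < s - 1 → z j = 0) ∧
      (∀ j : Fin d, (j : ℕ) = d - 1 → z j = 0) ∧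
      (Finset.univ.filter fun j => z j ≠ 0).card = s - 1)

open Classical in
lemma mem_Sprime_iff {d s : ℕ} {z : Fin d → ℝ} :
    z ∈ Sprime d s ↔ (∀ j, z j = -1 ∨ z j = 0 ∨ z j = 1) ∧
      (∀ j : Fin d, (j : ℕ) < s - 1 → z j = 0) ∧
      (∀ j : Fin d, (j : ℕ) = d - 1 → z j = 0) ∧
      (Finset.univ.filter fun j => z j ≠ 0).card = s - 1 := by
  simp only [Sprime, Finset.mem_filter, Fintype.mem_piFinset, Finset.mem_insert,
    Finset.mem_singleton, and_assoc]

open Classical in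
lemma cross_zero {d s : ℕ} (j k : Fin d) (hjk : j ≠ k) :
    ∑ z ∈ Sprime d s, z j * z k = 0 := by
  refine Finset.sum_involution (fun z _ => Function.update z j (-(z j))) ?_ ?_ ?_ ?_
  · intro z hz
    simp [Function.update_apply, hjk.symm]
  · intro z hz hne
    intro h
    have := congrFun h j
    simp at this
    have h0 : z j ≠ 0 := (mul_ne_zero_iff.mp hne).1
    apply h0
    linarith
  · intro z hz
    rw [mem_Sprime_iff] at hz ⊢
    obtain ⟨h1, h2, h3, h4⟩ := hz
    refine ⟨?_, ?_, ?_, ?_⟩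
    · intro m
      rcases eq_or_ne m j with rfl | hm
      · rcases h1 m with h | h | h <;> simp [h]
      · simpa [Function.update_apply, hm] using h1 m
    · intro m hm
      rcases eq_or_ne m j with rfl | hmj
      · simp [h2 m hm]
      · simpa [Function.update_apply, hmj] using h2 m hm
    · intro m hm
      rcases eq_or_ne m j with rfl | hmj
      · simp [h3 m hm]
      · simpa [Function.update_apply, hmj] using h3 m hm
    · rw [← h4]
      congr 1
      ext m
      rcases eq_or_ne m j with rfl | hm
      · simp
      · simp [Function.update_apply, hm]
  · intro z hz
    simp

open Classical in
lemma diag_eq {d s : ℕ} (j : Fin d) :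
    ∑ z ∈ Sprime d s, z j * z j =
      (((Sprime d s).filter fun z => z j ≠ 0).card : ℝ) := by
  rw [Finset.card_filter]
  push_cast
  apply Finset.sum_congr rfl
  intro z hz
  rcases (mem_Sprime_iff.mp hz).1 j with h | h | h <;> simp [h]

open Classical in
lemma filter_comp_perm_card {n : ℕ} (σ : Equiv.Perm (Fin n)) (p : Fin n → Prop) :
    (Finset.univ.filter fun m => p (σ m)).card = (Finset.univ.filter p).card := by
  apply Finset.card_nbij' σ σ.symm <;> intro m hm <;> simp_all

open Classical in
lemma N_const {d s : ℕ} {j k : Fin d}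
    (hj1 : s - 1 ≤ (j : ℕ)) (hj2 : (j : ℕ) < d - 1)
    (hk1 : s - 1 ≤ (k : ℕ)) (hk2 : (k : ℕ) < d - 1) :
    ((Sprime d s).filter fun z => z j ≠ 0).card =
      ((Sprime d s).filter fun z => z k ≠ 0).card := by
  have key : ∀ (a b : Fin d), s - 1 ≤ (a : ℕ) → (a : ℕ) < d - 1 →
      s - 1 ≤ (b : ℕ) → (b : ℕ) < d - 1 →
      ∀ z ∈ (Sprime d s).filter fun z => z a ≠ 0,
        (z ∘ Equiv.swap a b) ∈ (Sprime d s).filter fun z => z b ≠ 0 := by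
    intro a b ha1 ha2 hb1 hb2 z hz
    rw [Finset.mem_filter] at hz ⊢
    obtain ⟨hzS, hza⟩ := hz
    rw [mem_Sprime_iff] at hzS ⊢
    obtain ⟨h1, h2, h3, h4⟩ := hzS
    refine ⟨⟨fun m => h1 _, ?_, ?_, ?_⟩, ?_⟩
    · intro m hm
      have hma : m ≠ a := by intro h; subst h; omega
      have hmb : m ≠ b := by intro h; subst h; omega
      simp only [Function.comp_apply, Equiv.swap_apply_of_ne_of_ne hma hmb]
      exact h2 m hm
    · intro m hm
      have hma : m ≠ a := by intro h; subst h; omega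
      have hmb : m ≠ b := by intro h; subst h; omega
      simp only [Function.comp_apply, Equiv.swap_apply_of_ne_of_ne hma hmb]
      exact h3 m hm
    · rw [← h4]
      apply Finset.card_nbij' (Equiv.swap a b) (Equiv.swap a b) <;>
        intro m hm <;> simp_all [Equiv.swap_apply_self]
    · simpa [Equiv.swap_apply_right] using hza
  apply Finset.card_nbij' (fun z => z ∘ Equiv.swap j k) (fun z => z ∘ Equiv.swap k j)
  · exact key j k hj1 hj2 hk1 hk2
  · exact key k j hk1 hk2 hj1 hj2
  · intro z hz
    ext m
    simp [Equiv.swap_comm j k, Equiv.swap_apply_self]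
  · intro z hz
    ext m
    simp [Equiv.swap_comm k j, Equiv.swap_apply_self]

open Classical in
lemma supp_subset {d s : ℕ} {z : Fin d → ℝ} (hz : z ∈ Sprime d s) (j : Fin d)
    (hj : z j ≠ 0) : s - 1 ≤ (j : ℕ) ∧ (j : ℕ) < d - 1 := by
  obtain ⟨h1, h2, h3, h4⟩ := mem_Sprime_iff.mp hz
  constructor
  · by_contra h
    exact hj (h2 j (by omega))
  · have hjd : (j : ℕ) < d := j.isLt
    rcases lt_or_eq_of_le (Nat.le_sub_one_of_lt hjd) with h | h
    · exact h
    · exact absurd (h3 j h) hj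

open Classical in
lemma card_I {d s : ℕ} (hs : 1 ≤ s) (hd : s ≤ d) :
    (Finset.univ.filter fun j : Fin d => s - 1 ≤ (j : ℕ) ∧ (j : ℕ) < d - 1).card
      = d - s := by
  rw [show d - s = (Finset.Ico (s-1) (d-1)).card by rw [Nat.card_Ico]; omega]
  apply Finset.card_nbij (fun j : Fin d => (j : ℕ))
  · intro m hm
    simp only [Finset.mem_coe, Finset.mem_filter, Finset.mem_univ, true_and] at hm
    simp [Finset.mem_Ico, hm.1, hm.2]
  · intro a ha b hb hab
    exact Fin.val_injective hab
  · intro n hn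
    simp only [Finset.coe_Ico, Set.mem_Ico] at hn
    have hnd : n < d := by omega
    exact ⟨⟨n, hnd⟩, by simp only [Finset.coe_filter, Finset.mem_univ, Set.mem_setOf_eq, true_and]; omega, rfl⟩

open Classical in
lemma sum_N {d s : ℕ} :
    ∑ k ∈ (Finset.univ.filter fun j : Fin d => s - 1 ≤ (j : ℕ) ∧ (j : ℕ) < d - 1),
      ((Sprime d s).filter fun z => z k ≠ 0).card = (s - 1) * (Sprime d s).card := by
  simp_rw [Finset.card_filter]
  rw [Finset.sum_comm]
  have hkey : ∀ z ∈ Sprime d s,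
      (∑ k ∈ (Finset.univ.filter fun j : Fin d => s - 1 ≤ (j : ℕ) ∧ (j : ℕ) < d - 1),
        if z k ≠ 0 then 1 else 0) = s - 1 := by
    intro z hz
    have h4 := (mem_Sprime_iff.mp hz).2.2.2
    rw [← Finset.card_filter]
    have heq : ((Finset.univ.filter fun j : Fin d => s - 1 ≤ (j : ℕ) ∧ (j : ℕ) < d - 1).filter
        fun k => z k ≠ 0) = Finset.univ.filter fun k => z k ≠ 0 := by
      ext m
      simp only [Finset.mem_filter, Finset.mem_univ, true_and]
      constructor
      · rintro ⟨-, h⟩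
        exact h
      · intro h
        exact ⟨⟨(supp_subset hz m h).1, (supp_subset hz m h).2⟩, h⟩
    rw [heq, h4]
  rw [Finset.sum_congr rfl hkey, Finset.sum_const, smul_eq_mul, mul_comm]


open Classical in
/-- Averaging bound over `S'`: for any vector `φ` with entries in `{-1,0,1}` and at
most `s-1` nonzero coordinates,
`(1/|S'|)·∑_{z∈S'} ⟨φ, z⟩² ≤ (s−1)²/(d−s)`. -/
theorem Sprime_average_inner_sq_le (d s : ℕ) (hs : 2 ≤ s) (hd : 2 * s ≤ d)
    (φ : Fin d → ℝ) (hφ : ∀ j, φ j = -1 ∨ φ j = 0 ∨ φ j = 1)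
    (hφsparse : (Finset.univ.filter fun j => φ j ≠ 0).card ≤ s - 1) :
    (1 / (Sprime d s).card : ℝ) * ∑ z ∈ Sprime d s, (∑ j, φ j * z j) ^ 2 ≤
      ((s : ℝ) - 1) ^ 2 / ((d : ℝ) - s) := by
  have hs1 : 1 ≤ s := by omega
  have hsd : s ≤ d := by omega
  have hds : (0 : ℝ) < (d : ℝ) - s := by
    have : s < d := by omega
    have := Nat.cast_lt (α := ℝ) |>.mpr this
    linarith
  set I : Finset (Fin d) :=
    Finset.univ.filter fun j : Fin d => s - 1 ≤ (j : ℕ) ∧ (j : ℕ) < d - 1 with hI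
  set Nr : Fin d → ℝ := fun j => (((Sprime d s).filter fun z => z j ≠ 0).card : ℝ)
    with hNr
  -- Step 1: expand the square and kill cross terms
  have hT : ∑ z ∈ Sprime d s, (∑ j, φ j * z j) ^ 2 = ∑ j, (φ j) ^ 2 * Nr j := by
    have e1 : ∀ z : Fin d → ℝ, (∑ j, φ j * z j) ^ 2
        = ∑ j, ∑ k, φ j * φ k * (z j * z k) := by
      intro z
      rw [sq, Fintype.sum_mul_sum]
      apply Finset.sum_congr rfl; intro j _
      apply Finset.sum_congr rfl; intro k _
      ring
    simp_rw [e1]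
    rw [Finset.sum_comm]
    apply Finset.sum_congr rfl
    intro j _
    rw [Finset.sum_comm]
    have e2 : ∀ k : Fin d, ∑ z ∈ Sprime d s, φ j * φ k * (z j * z k)
        = φ j * φ k * ∑ z ∈ Sprime d s, z j * z k := by
      intro k; rw [Finset.mul_sum]
    simp_rw [e2]
    rw [Finset.sum_eq_single j]
    · rw [diag_eq]; ring
    · intro k _ hk
      rw [cross_zero j k (Ne.symm hk), mul_zero]
    · intro h; exact absurd (Finset.mem_univ j) h
  -- Step 2: terms outside I vanish
  have hT2 : ∑ j, (φ j) ^ 2 * Nr j = ∑ j ∈ I, (φ j) ^ 2 * Nr j := by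
    symm
    apply Finset.sum_subset (Finset.subset_univ I)
    intro j _ hj
    have hempty : ((Sprime d s).filter fun z => z j ≠ 0) = ∅ := by
      rw [Finset.filter_eq_empty_iff]
      intro z hz hne
      apply hj
      simp only [hI, Finset.mem_filter, Finset.mem_univ, true_and]
      exact supp_subset hz j hne
    simp [hNr, hempty]
  -- Step 3: Nr is constant on I
  have hj0 : s - 1 < d := by omega
  set j0 : Fin d := ⟨s - 1, hj0⟩ with hj0def
  set N : ℝ := Nr j0 with hN
  have hNconst : ∀ j ∈ I, Nr j = N := by
    intro j hj
    simp only [hI, Finset.mem_filter, Finset.mem_univ, true_and] at hj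
    simp only [hNr, hN]
    norm_cast
    exact N_const hj.1 hj.2 (by simp [hj0def]) (by simp [hj0def]; omega)
  have hNnonneg : 0 ≤ N := by simp [hN, hNr]
  -- Step 4: sum of squares of φ over I is at most s-1
  have hphi_sq : ∑ j ∈ I, (φ j) ^ 2 ≤ (s : ℝ) - 1 := by
    have h1 : ∑ j ∈ I, (φ j) ^ 2 ≤ ∑ j, (φ j) ^ 2 := by
      apply Finset.sum_le_sum_of_subset_of_nonneg (Finset.subset_univ I)
      intro j _ _; positivity
    have h2 : ∑ j, (φ j) ^ 2
        = ((Finset.univ.filter fun j => φ j ≠ 0).card : ℝ) := by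
      rw [Finset.card_filter]
      push_cast
      apply Finset.sum_congr rfl
      intro j _
      rcases hφ j with h | h | h <;> simp [h]
    have h3 : ((Finset.univ.filter fun j => φ j ≠ 0).card : ℝ) ≤ (s : ℝ) - 1 := by
      have := Nat.cast_le (α := ℝ) |>.mpr hφsparse
      have hcast : ((s - 1 : ℕ) : ℝ) = (s : ℝ) - 1 := by
        rw [Nat.cast_sub (by omega)]; norm_num
      linarith [hcast ▸ this]
    linarith
  -- Step 5: (d-s) * N = (s-1) * |S'|
  have hNd : ((d : ℝ) - s) * N = ((s : ℝ) - 1) * ((Sprime d s).card : ℝ) := by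
    have hnat : (d - s) * (((Sprime d s).filter fun z => z j0 ≠ 0).card)
        = (s - 1) * (Sprime d s).card := by
      have hconstN : ∀ k ∈ (Finset.univ.filter fun j : Fin d =>
          s - 1 ≤ (j : ℕ) ∧ (j : ℕ) < d - 1),
          ((Sprime d s).filter fun z => z k ≠ 0).card
            = ((Sprime d s).filter fun z => z j0 ≠ 0).card := by
        intro k hk
        simp only [Finset.mem_filter, Finset.mem_univ, true_and] at hk
        exact N_const hk.1 hk.2 (by simp [hj0def]) (by simp [hj0def]; omega)
      have hsum := sum_N (d := d) (s := s)
      have h5 : ∑ k ∈ (Finset.univ.filter fun j : Fin d =>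
            s - 1 ≤ (j : ℕ) ∧ (j : ℕ) < d - 1),
          ((Sprime d s).filter fun z => z k ≠ 0).card
          = ∑ _k ∈ (Finset.univ.filter fun j : Fin d =>
            s - 1 ≤ (j : ℕ) ∧ (j : ℕ) < d - 1),
          ((Sprime d s).filter fun z => z j0 ≠ 0).card :=
        Finset.sum_congr rfl hconstN
      rw [h5, Finset.sum_const, smul_eq_mul, card_I hs1 hsd] at hsum
      exact hsum
    have := congrArg (fun n : ℕ => (n : ℝ)) hnat
    push_cast [Nat.cast_sub hsd, Nat.cast_sub hs1] at this
    simpa [hN, hNr, Nat.cast_sub hs1] using this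
  -- Conclusion
  rw [hT, hT2, Finset.sum_congr rfl (fun j hj => by rw [hNconst j hj]), ← Finset.sum_mul]
  rcases Nat.eq_zero_or_pos (Sprime d s).card with hC | hC
  · have hCempty : Sprime d s = ∅ := Finset.card_eq_zero.mp hC
    have : N = 0 := by
      simp [hN, hNr, hCempty]
    rw [this, mul_zero, mul_zero]
    positivity
  · have hCpos : (0 : ℝ) < ((Sprime d s).card : ℝ) := by exact_mod_cast hC
    have hstep : (1 / ((Sprime d s).card : ℝ)) * ((∑ j ∈ I, (φ j) ^ 2) * N)
        ≤ (1 / ((Sprime d s).card : ℝ)) * (((s : ℝ) - 1) * N) := by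
      apply mul_le_mul_of_nonneg_left _ (by positivity)
      exact mul_le_mul_of_nonneg_right hphi_sq hNnonneg
    refine hstep.trans (le_of_eq ?_)
    field_simp
    linear_combination ((s : ℝ) - 1) * hNd
end
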